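/- Let E be a symmetric real v×v idempotent matrix (E² = E = Eᵀ) of rank m such that EJ = 0. If dim ⟨J,E⟩∘ = 2, then m+1 divides v and E = ((m+1)/v)·K − (1/v)·J, where K is a 01-matrix permutation-similar to I_{m+1} ⊗ J_{v/(m+1)}. -/

import Mathlib

open Matrix Finset Kronecker SimpleGraph

/-- The all-ones matrix `J`. -/
def matJ (α β : Type*) : Matrix α β ℝ := Matrix.of fun _ _ => 1

/-- Hadamard (entrywise) powers of a matrix; the 0-th power is the all-ones matrix `J`. -/
def hadPow {V : Type*} (E : Matrix V V ℝ) : ℕ → Matrix V V ℝ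
  | 0 => matJ V V
  | n + 1 => Matrix.hadamard E (hadPow E n)

/-- The idempotent `∘`-algebra `⟨J, E⟩∘`: the linear span over `ℝ` of `J` together with all
Hadamard powers `E, E∘E, E∘E∘E, …` of `E`. -/
noncomputable def hadSpan {V : Type*} (E : Matrix V V ℝ) : Submodule ℝ (Matrix V V ℝ) :=
  Submodule.span ℝ (Set.range (hadPow E))

/-- The adjacency algebra of a graph with adjacency matrix `A`:
the linear span over `ℝ` of the powers `I, A, A², …` of `A`. -/
noncomputable def adjAlg {V : Type*} [Fintype V] [DecidableEq V] (A : Matrix V V ℝ) :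
    Submodule ℝ (Matrix V V ℝ) :=
  Submodule.span ℝ (Set.range fun n : ℕ => A ^ n)

/-- `A` and `B` are permutation-similar: `B = PᵀAP` for a permutation matrix `P`,
i.e. `A` can be obtained from `B` by simultaneous re-indexing of rows and columns
along a bijection of the index types. -/
def PermSimilar {α β : Type*} (A : Matrix α α ℝ) (B : Matrix β β ℝ) : Prop :=
  ∃ e : α ≃ β, ∀ i j, A i j = B (e i) (e j)

/-- The multiplicity of `μ` as an eigenvalue of the square matrix `A`, i.e. the dimension of
the eigenspace `ker (μ•I − A)`. -/
noncomputable def eigMult {V : Type*} [Fintype V] [DecidableEq V]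
    (A : Matrix V V ℝ) (μ : ℝ) : ℕ :=
  Module.finrank ℝ (LinearMap.ker (Matrix.toLin' (μ • (1 : Matrix V V ℝ) - A)))

/-- `E` is the spectral idempotent of `A` for the eigenvalue `μ`: the real symmetric matrix
with `E² = E`, `A·E = μ·E`, and `rank E = dim ker (μI − A)`; equivalently, the matrix of the
orthogonal projection onto the eigenspace `ker (μI − A)`. -/
def IsSpectralIdempotent {V : Type*} [Fintype V] [DecidableEq V]
    (A E : Matrix V V ℝ) (μ : ℝ) : Prop :=
  E.IsSymm ∧ E * E = E ∧ A * E = μ • E ∧ E.rank = eigMult A μ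

open Classical in
/-- The map `c` describes an indubitable partition of `G` with parameters `(a, b)`:
the cells of the partition are the fibers of `c`, and for each cell `P` and each vertex `x`
the number of neighbors of `x` in `P` equals `a` if `x ∈ P` and `b` otherwise. -/
def IsIndubitable {V ι : Type*} (G : SimpleGraph V) (c : V → ι) (a b : ℕ) : Prop :=
  Function.Surjective c ∧
    ∀ (i : ι) (x : V), {y : V | G.Adj x y ∧ c y = i}.ncard = if c x = i then a else b

/-- `G` has a full indubitable partition corresponding to the eigenvalue `μ` of multiplicity
`m`: an indubitable partition with `m + 1` cells and parameters `(a, b)` with `a − b = μ`. -/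
def HasFullIndubitable {V : Type*} (G : SimpleGraph V) (μ : ℝ) (m : ℕ) : Prop :=
  ∃ (c : V → Fin (m + 1)) (a b : ℕ), IsIndubitable G c a b ∧ (a : ℝ) - (b : ℝ) = μ

instance {α β : Type*} [DecidableEq α] [DecidableEq β] (G : SimpleGraph α) (H : SimpleGraph β)
    [DecidableRel G.Adj] [DecidableRel H.Adj] : DecidableRel (G □ H).Adj := fun x y =>
  inferInstanceAs (Decidable ((G.Adj x.1 y.1 ∧ x.2 = y.2) ∨ (H.Adj x.2 y.2 ∧ x.1 = y.1)))

/-- Lemma 1D. Let `E` be a symmetric real `v×v` idempotent matrix of rank `m`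
with `EJ = 0`. If `dim ⟨J,E⟩∘ = 2`, then `m+1 ∣ v` and `E = ((m+1)/v)•K − (1/v)•J`, where `K`
is a 01-matrix permutation-similar to `I_{m+1} ⊗ J_{v/(m+1)}`. -/
theorem statement1 (v m : ℕ) (E : Matrix (Fin v) (Fin v) ℝ)
    (hsymm : E.IsSymm) (hidem : E * E = E) (hrank : E.rank = m)
    (hEJ : E * matJ (Fin v) (Fin v) = 0)
    (hdim : Module.finrank ℝ (hadSpan E) = 2) :
    (m + 1) ∣ v ∧
    ∃ K : Matrix (Fin v) (Fin v) ℝ,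
      (∀ i j, K i j = 0 ∨ K i j = 1) ∧
      PermSimilar K ((1 : Matrix (Fin (m + 1)) (Fin (m + 1)) ℝ) ⊗ₖ
        matJ (Fin (v / (m + 1))) (Fin (v / (m + 1)))) ∧
      E = (((m : ℝ) + 1) / (v : ℝ)) • K - ((1 : ℝ) / (v : ℝ)) • matJ (Fin v) (Fin v) := by
  classical
  -- v ≠ 0
  rcases Nat.eq_zero_or_pos v with hv0 | hv
  · exfalso
    have h1 : Module.finrank ℝ (hadSpan E) ≤ Module.finrank ℝ (Matrix (Fin v) (Fin v) ℝ) :=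
      Submodule.finrank_le _
    rw [hdim, Module.finrank_matrix] at h1
    simp [hv0] at h1
  have hvR : (v : ℝ) ≠ 0 := Nat.cast_ne_zero.mpr hv.ne'
  set J : Matrix (Fin v) (Fin v) ℝ := matJ (Fin v) (Fin v) with hJdef
  have i0 : Fin v := ⟨0, hv⟩
  -- E is not constant
  have hnc : ∃ p q r s : Fin v, E p q ≠ E r s := by
    by_contra h
    push_neg at h
    have hle : hadSpan E ≤ Submodule.span ℝ {J} := by
      rw [hadSpan, Submodule.span_le]
      rintro _ ⟨n, rfl⟩
      induction n with
      | zero => exact Submodule.subset_span rfl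
      | succ n ih =>
        rcases Submodule.mem_span_singleton.mp ih with ⟨d, hd⟩
        refine Submodule.mem_span_singleton.mpr ⟨E i0 i0 * d, ?_⟩
        ext i j
        have : hadPow E n i j = d := by rw [← hd]; simp [hJdef, matJ]
        simp [hadPow, Matrix.hadamard, this, hJdef, matJ, h i j i0 i0]
    have hJ0 : J ≠ 0 := by
      intro hJ
      have : (1 : ℝ) = 0 := by
        have := congrFun (congrFun hJ i0) i0
        simpa [hJdef, matJ] using this
      norm_num at this
    have h2 : Module.finrank ℝ (hadSpan E) ≤ 1 := by
      have := Submodule.finrank_mono hle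
      rwa [finrank_span_singleton hJ0] at this
    omega
  obtain ⟨p, q, r, s, hpq⟩ := hnc
  -- J and E are linearly independent
  have hJE : LinearIndependent ℝ ![J, E] := by
    rw [LinearIndependent.pair_iff]
    intro a b hab
    have key : ∀ i j : Fin v, a + b * E i j = 0 := by
      intro i j
      have h1 : (a • J + b • E) i j = (0 : Matrix (Fin v) (Fin v) ℝ) i j := by rw [hab]
      simpa [hJdef, matJ] using h1
    have hb : b = 0 := by
      by_contra hb
      exact hpq (mul_left_cancel₀ hb (by linarith [key p q, key r s]))
    refine ⟨by simpa [hb] using key p q, hb⟩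
  -- span {J, E} = hadSpan E
  have hE1 : hadPow E 1 = E := by
    ext i j; simp [hadPow, Matrix.hadamard, matJ]
  have hW : Submodule.span ℝ (Set.range ![J, E]) = hadSpan E := by
    apply Submodule.eq_of_le_of_finrank_le
    · rw [Submodule.span_le]
      rintro _ ⟨i, rfl⟩
      fin_cases i
      · exact Submodule.subset_span ⟨0, rfl⟩
      · exact Submodule.subset_span ⟨1, hE1⟩
    · rw [hdim, finrank_span_eq_card hJE]
      simp
  have hrange : Set.range ![J, E] = {J, E} := by
    ext z; simp [Matrix.range_cons, Matrix.range_empty]; tauto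
  obtain ⟨x, y, hxy⟩ : ∃ x y : ℝ, x • J + y • E = hadPow E 2 := by
    have : hadPow E 2 ∈ Submodule.span ℝ ({J, E} : Set (Matrix (Fin v) (Fin v) ℝ)) := by
      rw [← hrange, hW]
      exact Submodule.subset_span ⟨2, rfl⟩
    exact Submodule.mem_span_pair.mp this
  -- the quadratic equation satisfied by every entry
  have hquad : ∀ i j : Fin v, E i j * E i j = x + y * E i j := by
    intro i j
    have h1 : (x • J + y • E) i j = hadPow E 2 i j := by rw [hxy]
    have h2 : hadPow E 2 i j = E i j * (E i j * 1) := rfl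
    rw [h2] at h1
    simpa [hJdef, matJ] using h1.symm
  -- row sums vanish
  have hrow : ∀ i : Fin v, ∑ l, E i l = 0 := by
    intro i
    have h1 : (E * J) i i = (0 : Matrix (Fin v) (Fin v) ℝ) i i := by rw [hEJ]
    simpa [Matrix.mul_apply, hJdef, matJ] using h1
  -- Gram identity
  have hEE : ∀ i j : Fin v, ∑ l, E i l * E j l = E i j := by
    intro i j
    have h1 : (E * E) i j = E i j := by rw [hidem]
    rw [Matrix.mul_apply] at h1
    rw [← h1]
    exact Finset.sum_congr rfl fun l _ => by rw [hsymm.apply j l]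
  -- diagonal is constant
  have hdiagvx : ∀ i : Fin v, E i i = v * x := by
    intro i
    have h1 : ∑ l, E i l * E i l = ∑ l, (x + y * E i l) :=
      Finset.sum_congr rfl fun l _ => hquad i l
    rw [hEE i i] at h1
    rw [h1, Finset.sum_add_distrib, ← Finset.mul_sum, hrow i]
    simp [mul_comm]
  -- trace equals rank
  have htrace : Matrix.trace E = (m : ℝ) := by
    have hproj : LinearMap.IsProj (LinearMap.range (Matrix.toLin' E)) (Matrix.toLin' E) := by
      constructor
      · intro x; exact LinearMap.mem_range_self _ x
      · rintro x ⟨w, rfl⟩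
        have : Matrix.toLin' (E * E) = (Matrix.toLin' E).comp (Matrix.toLin' E) :=
          Matrix.toLin'_mul E E
        rw [hidem] at this
        exact (congrFun (congrArg DFunLike.coe this) w).symm
    have h1 := hproj.trace
    rw [LinearMap.trace_eq_matrix_trace ℝ (Pi.basisFun ℝ (Fin v)),
      LinearMap.toMatrix_eq_toMatrix', LinearMap.toMatrix'_toLin'] at h1
    have h2 : E.rank = Module.finrank ℝ (LinearMap.range (Matrix.toLin' E)) := by
      rw [Matrix.rank, Matrix.toLin'_apply']
    rw [h1, ← h2, hrank]
  -- the diagonal value α = m / v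
  set α : ℝ := (m : ℝ) / v with hαdef
  have hvx : (v : ℝ) * x = α := by
    have h1 : Matrix.trace E = ∑ i, E i i := rfl
    rw [Finset.sum_congr rfl fun i _ => hdiagvx i, Finset.sum_const] at h1
    rw [htrace] at h1
    simp at h1
    rw [hαdef]
    field_simp
    nlinarith [h1]
  have hdiag : ∀ i : Fin v, E i i = α := fun i => (hdiagvx i).trans hvx
  -- α ≠ 0
  have hα : α ≠ 0 := by
    intro hα0
    apply hpq
    have hz : ∀ i j : Fin v, E i j = 0 := by
      intro i j
      have h1 : ∑ l, E i l * E i l = 0 := by rw [hEE i i, hdiag i, hα0]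
      have h2 := (Finset.sum_eq_zero_iff_of_nonneg
        (fun l _ => mul_self_nonneg (E i l))).mp h1 j (Finset.mem_univ j)
      exact mul_self_eq_zero.mp h2
    rw [hz p q, hz r s]
  -- the two values α and β
  have hroot : α * α = x + y * α := by
    have := hquad i0 i0
    rwa [hdiag i0] at this
  set β : ℝ := y - α with hβdef
  have hval : ∀ i j : Fin v, E i j = α ∨ E i j = β := by
    intro i j
    have h1 : (E i j - α) * (E i j - β) = 0 := by
      rw [hβdef]; linear_combination hquad i j - hroot
    rcases mul_eq_zero.mp h1 with h | h
    · exact Or.inl (by linarith [sub_eq_zero.mp h])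
    · exact Or.inr (by linarith [sub_eq_zero.mp h])
  have hβα : β ≠ α := by
    intro hβ
    apply hpq
    have hall : ∀ i j : Fin v, E i j = α := by
      intro i j; rcases hval i j with h | h
      · exact h
      · rw [h, hβ]
    rw [hall p q, hall r s]
  -- rows-equal characterization
  have hrowseq : ∀ i j : Fin v, E i j = α ↔ ∀ l, E i l = E j l := by
    intro i j
    constructor
    · intro h
      have hexp : ∑ l, (E i l - E j l) * (E i l - E j l) = 0 := by
        have h1 : ∑ l, (E i l - E j l) * (E i l - E j l) =
            (∑ l, E i l * E i l) + (∑ l, E j l * E j l) - 2 * (∑ l, E i l * E j l) := by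
          rw [Finset.mul_sum, ← Finset.sum_add_distrib, ← Finset.sum_sub_distrib]
          exact Finset.sum_congr rfl fun l _ => by ring
        rw [h1, hEE i i, hEE j j, hEE i j, hdiag i, hdiag j, h]
        ring
      intro l
      have h2 := (Finset.sum_eq_zero_iff_of_nonneg
        (fun l _ => mul_self_nonneg (E i l - E j l))).mp hexp l (Finset.mem_univ l)
      have := mul_self_eq_zero.mp h2
      linarith
    · intro h
      rw [h j, hdiag j]
  -- counting: every row has exactly k entries equal to α, and k * (m+1) = v
  have hβv : β = -1 / v ∧ ∀ i : Fin v,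
      ((Finset.univ.filter fun j => E i j = α).card : ℝ) * ((m : ℝ) + 1) = v := by
    have key : ∀ i : Fin v, β = -1 / v ∧
        ((Finset.univ.filter fun j => E i j = α).card : ℝ) * ((m : ℝ) + 1) = v := by
      intro i
      set ki := (Finset.univ.filter fun j => E i j = α).card with hki
      set ci := (Finset.univ.filter fun j => ¬ E i j = α).card with hci
      have hkc : (ki : ℝ) + ci = v := by
        have := Finset.card_filter_add_card_filter_not
          (s := (Finset.univ : Finset (Fin v))) (p := fun j => E i j = α)
        rw [Finset.card_univ, Fintype.card_fin] at this
        exact_mod_cast this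
      have hsplit1 : (ki : ℝ) * α + (ci : ℝ) * β = 0 := by
        have h1 : ∑ j ∈ Finset.univ.filter (fun j => E i j = α), E i j = (ki : ℝ) * α := by
          rw [Finset.sum_congr rfl fun j hj => (Finset.mem_filter.mp hj).2, Finset.sum_const]
          simp [hki]
        have h2 : ∑ j ∈ Finset.univ.filter (fun j => ¬ E i j = α), E i j = (ci : ℝ) * β := by
          rw [Finset.sum_congr rfl (fun j hj => (hval i j).resolve_left
            (Finset.mem_filter.mp hj).2), Finset.sum_const]
          simp [hci]
        have h3 := Finset.sum_filter_add_sum_filter_not Finset.univ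
          (fun j => E i j = α) (fun j => E i j)
        rw [h1, h2, hrow i] at h3
        linarith
      have hsplit2 : (ki : ℝ) * (α * α) + (ci : ℝ) * (β * β) = α := by
        have h1 : ∑ j ∈ Finset.univ.filter (fun j => E i j = α), E i j * E i j
            = (ki : ℝ) * (α * α) := by
          rw [Finset.sum_congr rfl fun j hj => by
            rw [(Finset.mem_filter.mp hj).2], Finset.sum_const]
          simp [hki]
        have h2 : ∑ j ∈ Finset.univ.filter (fun j => ¬ E i j = α), E i j * E i j
            = (ci : ℝ) * (β * β) := by
          rw [Finset.sum_congr rfl fun j hj => by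
            rw [(hval i j).resolve_left (Finset.mem_filter.mp hj).2], Finset.sum_const]
          simp [hci]
        have h3 := Finset.sum_filter_add_sum_filter_not Finset.univ
          (fun j => E i j = α) (fun j => E i j * E i j)
        rw [h1, h2] at h3
        rw [h3, hEE i i, hdiag i]
      have hk1 : (ki : ℝ) * (α - β) = 1 := by
        have h4 : α * ((ki : ℝ) * (α - β)) = α * 1 := by
          linear_combination hsplit2 - β * hsplit1
        exact mul_left_cancel₀ hα h4
      have hβv' : β = -1 / v := by
        have h5 : 1 + (v : ℝ) * β = 0 := by
          linear_combination (-1 : ℝ) * hk1 - β * hkc + hsplit1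
        field_simp
        linarith
      refine ⟨hβv', ?_⟩
      have hαβ : α - β = ((m : ℝ) + 1) / v := by
        rw [hαdef, hβv']; field_simp; ring
      rw [hαβ] at hk1
      field_simp at hk1
      linarith
    exact ⟨(key i0).1, fun i => (key i).2⟩
  obtain ⟨hβv, hkR⟩ := hβv
  -- natural-number counting
  have hkN : ∀ i : Fin v, (Finset.univ.filter fun j => E i j = α).card * (m + 1) = v := by
    intro i
    exact_mod_cast (by push_cast; exact hkR i :
      (((Finset.univ.filter fun j => E i j = α).card * (m + 1) : ℕ) : ℝ) = (v : ℕ))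
  set k := (Finset.univ.filter fun j => E i0 j = α).card with hkdef
  have hdvd : (m + 1) ∣ v := ⟨k, by rw [← hkN i0]; ring⟩
  have hs : v / (m + 1) = k :=
    Nat.div_eq_of_eq_mul_left (Nat.succ_pos m) (hkN i0).symm
  have hcards : ∀ i : Fin v, (Finset.univ.filter fun j => E i j = α).card = k := by
    intro i
    exact Nat.eq_of_mul_eq_mul_right (Nat.succ_pos m) ((hkN i).trans (hkN i0).symm)
  -- the setoid of equal rows
  have htrans : ∀ {i j l : Fin v}, E i j = α → E j l = α → E i l = α := by
    intro i j l hij hjl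
    rw [(hrowseq i j).mp hij l]
    exact hjl
  have hsymm' : ∀ {i j : Fin v}, E i j = α → E j i = α := by
    intro i j h
    rw [hsymm.apply i j]
    exact h
  letI st : Setoid (Fin v) := ⟨fun i j => E i j = α,
    ⟨fun i => hdiag i, fun h => hsymm' h, fun h1 h2 => htrans h1 h2⟩⟩
  have hstr : ∀ i j : Fin v, (i ≈ j) = (E i j = α) := fun i j => rfl
  -- fibers of the quotient map all have size k
  have hfibQ : ∀ q : Quotient st, Fintype.card {x : Fin v // Quotient.mk st x = q} = k := by
    intro q
    have hiff : ∀ x : Fin v, (Quotient.mk st x = q) ↔ E q.out x = α := by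
      intro x
      rw [Quotient.mk_eq_iff_out]
      exact ⟨fun h => hsymm' h, fun h => hsymm' h⟩
    rw [Fintype.card_congr (Equiv.subtypeEquivRight hiff), Fintype.card_subtype]
    exact hcards q.out
  have hk0 : 0 < k := by
    rw [hkdef]
    refine Finset.card_pos.mpr ⟨i0, ?_⟩
    simp [hdiag i0]
  -- the quotient has m+1 classes
  have hQcard : Fintype.card (Quotient st) = m + 1 := by
    have h1 : v = Fintype.card (Quotient st) * k := by
      calc v = Fintype.card (Fin v) := (Fintype.card_fin v).symm
        _ = Fintype.card (Σ q : Quotient st, {x : Fin v // Quotient.mk st x = q}) :=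
          Fintype.card_congr (Equiv.sigmaFiberEquiv (Quotient.mk st)).symm
        _ = ∑ q : Quotient st, Fintype.card {x : Fin v // Quotient.mk st x = q} :=
          Fintype.card_sigma
        _ = ∑ _q : Quotient st, k := Finset.sum_congr rfl fun q _ => hfibQ q
        _ = Fintype.card (Quotient st) * k := by
          rw [Finset.sum_const, Finset.card_univ, smul_eq_mul]
    have h3 := hkN i0
    exact Nat.eq_of_mul_eq_mul_right hk0
      (h1.symm.trans (h3.symm.trans (Nat.mul_comm k (m + 1))))
  have eQ : Quotient st ≃ Fin (m + 1) := Fintype.equivFinOfCardEq hQcard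
  have hfibc : ∀ a : Fin (m + 1),
      Fintype.card {z : Fin v // eQ (Quotient.mk st z) = a} = v / (m + 1) := by
    intro a
    have hiff : ∀ z : Fin v, (eQ (Quotient.mk st z) = a) ↔
        (Quotient.mk st z = eQ.symm a) := by
      intro z
      constructor
      · intro h; rw [← h]; simp
      · intro h; rw [h]; simp
    calc Fintype.card {z : Fin v // eQ (Quotient.mk st z) = a}
        = Fintype.card {z : Fin v // Quotient.mk st z = eQ.symm a} :=
          Fintype.card_congr (Equiv.subtypeEquivRight hiff)
      _ = k := hfibQ _
      _ = v / (m + 1) := hs.symm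
  have F : ∀ a : Fin (m + 1), {z : Fin v // eQ (Quotient.mk st z) = a} ≃ Fin (v / (m + 1)) :=
    fun a => Fintype.equivFinOfCardEq (hfibc a)
  let e : Fin v ≃ Fin (m + 1) × Fin (v / (m + 1)) :=
    (Equiv.sigmaFiberEquiv (fun z => eQ (Quotient.mk st z))).symm.trans
      (Equiv.sigmaEquivProdOfEquiv F)
  have he1 : ∀ z : Fin v, (e z).1 = eQ (Quotient.mk st z) := fun z => rfl
  have hceq : ∀ i j : Fin v, eQ (Quotient.mk st i) = eQ (Quotient.mk st j) ↔ E i j = α := by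
    intro i j
    constructor
    · intro h
      exact Quotient.exact (eQ.injective h)
    · intro h
      exact congrArg eQ (Quotient.sound h)
  -- assemble the answer
  refine ⟨hdvd, Matrix.of fun i j => if E i j = α then (1 : ℝ) else 0, ?_, ⟨e, ?_⟩, ?_⟩
  · intro i j
    by_cases h : E i j = α <;> simp [h]
  · intro i j
    rw [Matrix.kroneckerMap_apply]
    simp only [Matrix.of_apply, matJ, Matrix.one_apply, he1 i, he1 j]
    by_cases h : E i j = α
    · rw [if_pos h, if_pos ((hceq i j).mpr h)]
      simp
    · rw [if_neg h, if_neg (fun hc => h ((hceq i j).mp hc))]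
      simp
  · ext i j
    simp only [Matrix.sub_apply, Matrix.smul_apply, Matrix.of_apply, hJdef, matJ,
      smul_eq_mul]
    rcases hval i j with h | h
    · rw [h, if_pos rfl]
      rw [hαdef]
      field_simp
      ring
    · rw [h, if_neg hβα, hβv]
      ring
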